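/- arXiv:1908.08296 — 2 statements merged into one kernel-verified Lean document; each statement's English description precedes it below -/
import Mathlib

section
/- Let Φ be an irreducible reduced crystallographic simply-laced root system with base Δ and highest root θ, and let α ∈ Δ be an extreme Heisenberg root with neighbour β. Then there exists an element w of the subgroup W_{Δ∖{α}} of the Weyl group generated by the simple reflections in the other simple roots such that w² = 1 and w(α) = θ − α − β. (Heisenberg case of the paper's Lemma on the existence of an involution in the Weyl group of the Levi L_α sending α to δ_α = θ − α − β; under the stated hypotheses Φ is of type E_6, E_7 or E_8.) -/
open scoped InnerProductSpace

namespace PaperRS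

variable {E : Type*} [NormedAddCommGroup E] [InnerProductSpace ℝ E]

/-- A reduced crystallographic simply-laced root system, normalized so that every root has
squared length `2` (hence `⟪δ, ε⟫` is the Cartan integer `⟨δ, ε^∨⟩`). -/
structure IsRootSystem (Φ : Set E) : Prop where
  finite : Φ.Finite
  nonzero : (0 : E) ∉ Φ
  span_top : Submodule.span ℝ Φ = ⊤
  norm_two : ∀ α ∈ Φ, ⟪α, α⟫_ℝ = 2
  reduced : ∀ α ∈ Φ, ∀ t : ℝ, t • α ∈ Φ → t = 1 ∨ t = -1
  cartan_int : ∀ α ∈ Φ, ∀ β ∈ Φ, ∃ n : ℤ, ⟪α, β⟫_ℝ = (n : ℝ)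
  reflect_mem : ∀ α ∈ Φ, ∀ β ∈ Φ, β - ⟪β, α⟫_ℝ • α ∈ Φ

/-- Irreducibility: `Φ` is nonempty and cannot be split into two mutually orthogonal parts. -/
def IsIrreducible (Φ : Set E) : Prop :=
  Φ.Nonempty ∧ ∀ Φ₁ Φ₂ : Set E, Φ = Φ₁ ∪ Φ₂ →
    (∀ a ∈ Φ₁, ∀ b ∈ Φ₂, ⟪a, b⟫_ℝ = 0) → Φ₁ = ∅ ∨ Φ₂ = ∅

/-- The reflection in (the hyperplane orthogonal to) a root `α` of squared length `2`. -/
def sRefl (α : E) : Function.End E := fun x => x - ⟪x, α⟫_ℝ • α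

/-- The group generated by the reflections in the elements of `S`; since every reflection is
an involution, the submonoid generated by the reflections coincides with the generated group. -/
def genBy (S : Set E) : Submonoid (Function.End E) :=
  Submonoid.closure (sRefl '' S)

/-- The Weyl group of `Φ`: the group generated by the reflections in all the roots. -/
abbrev WeylGroup (Φ : Set E) : Submonoid (Function.End E) := genBy Φ

/-- A base (set of simple roots) of `Φ`, together with the (unique) integer coefficients
`coeff δ γ` of each root `δ` with respect to the simple roots. -/
structure Base (Φ : Set E) where
  Δ : Finset E
  coeff : E → E → ℤ
  subset : ↑Δ ⊆ Φ
  indep : LinearIndependent ℝ (fun γ : {x : E // x ∈ Δ} => (γ : E))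
  expand : ∀ δ ∈ Φ, δ = ∑ γ ∈ Δ, (coeff δ γ : ℝ) • γ
  sign : ∀ δ ∈ Φ, (∀ γ ∈ Δ, 0 ≤ coeff δ γ) ∨ (∀ γ ∈ Δ, coeff δ γ ≤ 0)

variable {Φ : Set E}

/-- `θ` is the highest root of `Φ` with respect to the base `B`. -/
def IsHighest (B : Base Φ) (θ : E) : Prop :=
  θ ∈ Φ ∧ ∀ δ ∈ Φ, ∀ γ ∈ B.Δ, B.coeff δ γ ≤ B.coeff θ γ

/-- `α` is a Heisenberg simple root: the highest root `θ` has `α`-coefficient `2`, and every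
root other than `±θ` has `α`-coefficient in `{-1, 0, 1}`. -/
def IsHeisenberg (B : Base Φ) (θ α : E) : Prop :=
  B.coeff θ α = 2 ∧
    ∀ δ ∈ Φ, δ ≠ θ → δ ≠ -θ →
      B.coeff δ α = -1 ∨ B.coeff δ α = 0 ∨ B.coeff δ α = 1

/-- `α` is an extreme simple root with (unique) neighbour `β`. -/
def IsExtreme (B : Base Φ) (α β : E) : Prop :=
  β ∈ B.Δ ∧ β ≠ α ∧ ⟪α, β⟫_ℝ ≠ 0 ∧
    ∀ γ ∈ B.Δ, γ ≠ α → ⟪α, γ⟫_ℝ ≠ 0 → γ = β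

/-- `Φ_α`: the roots with `α`-coefficient `1` that are orthogonal to `α`. -/
def PhiSet (B : Base Φ) (α : E) : Set E :=
  {ε ∈ Φ | B.coeff ε α = 1 ∧ ⟪ε, α⟫_ℝ = 0}

/-- `Ψ_α`: the roots `ε` with `α`-coefficient `1` and `⟪ε, α⟫ ≤ 0`. -/
def PsiSet (B : Base Φ) (α : E) : Set E :=
  {ε ∈ Φ | B.coeff ε α = 1 ∧ ⟪ε, α⟫_ℝ ≤ 0}

section Basic

variable {E : Type*} [NormedAddCommGroup E] [InnerProductSpace ℝ E] {Φ : Set E}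

lemma RS.neg_mem (hΦ : IsRootSystem Φ) {δ : E} (hδ : δ ∈ Φ) : -δ ∈ Φ := by
  have h := hΦ.reflect_mem δ hδ δ hδ
  rwa [hΦ.norm_two δ hδ, show δ - (2:ℝ) • δ = -δ by module] at h

lemma RS.inner_int (hΦ : IsRootSystem Φ) {δ ε : E} (hδ : δ ∈ Φ) (hε : ε ∈ Φ) :
    ∃ n : ℤ, ⟪δ, ε⟫_ℝ = (n : ℝ) ∧ -2 ≤ n ∧ n ≤ 2 := by
  obtain ⟨n, hn⟩ := hΦ.cartan_int δ hδ ε hε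
  refine ⟨n, hn, ?_, ?_⟩ <;>
  · have h := real_inner_mul_inner_self_le δ ε
    rw [hn, hΦ.norm_two δ hδ, hΦ.norm_two ε hε] at h
    have : (n:ℝ)^2 ≤ 4 := by nlinarith
    have : n^2 ≤ 4 := by exact_mod_cast this
    nlinarith

lemma RS.eq_of_inner_two (hΦ : IsRootSystem Φ) {δ ε : E} (hδ : δ ∈ Φ) (hε : ε ∈ Φ)
    (h : ⟪δ, ε⟫_ℝ = 2) : δ = ε := by
  have h0 : ⟪δ - ε, δ - ε⟫_ℝ = 0 := by
    rw [inner_sub_left, inner_sub_right, inner_sub_right, hΦ.norm_two δ hδ, hΦ.norm_two ε hε,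
      show ⟪ε,δ⟫_ℝ = 2 from (real_inner_comm δ ε ▸ h), h]
    ring
  have := inner_self_eq_zero.mp h0
  rwa [sub_eq_zero] at this

lemma RS.eq_neg_of_inner_neg_two (hΦ : IsRootSystem Φ) {δ ε : E} (hδ : δ ∈ Φ) (hε : ε ∈ Φ)
    (h : ⟪δ, ε⟫_ℝ = -2) : δ = -ε := by
  refine RS.eq_of_inner_two hΦ hδ (RS.neg_mem hΦ hε) ?_
  rw [inner_neg_right, h]; ring

lemma RS.add_mem (hΦ : IsRootSystem Φ) {δ ε : E} (hδ : δ ∈ Φ) (hε : ε ∈ Φ)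
    (h : ⟪δ, ε⟫_ℝ = -1) : δ + ε ∈ Φ := by
  have h2 := hΦ.reflect_mem ε hε δ hδ
  rwa [h, show δ - (-1:ℝ) • ε = δ + ε by module] at h2

lemma RS.sub_mem (hΦ : IsRootSystem Φ) {δ ε : E} (hδ : δ ∈ Φ) (hε : ε ∈ Φ)
    (h : ⟪δ, ε⟫_ℝ = 1) : δ - ε ∈ Φ := by
  have h2 := hΦ.reflect_mem ε hε δ hδ
  rwa [h, one_smul] at h2

lemma RS.sRefl_apply (γ x : E) : sRefl γ x = x - ⟪x, γ⟫_ℝ • γ := rfl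

lemma RS.sRefl_mem (hΦ : IsRootSystem Φ) {γ ε : E} (hγ : γ ∈ Φ) (hε : ε ∈ Φ) :
    sRefl γ ε ∈ Φ := hΦ.reflect_mem γ hγ ε hε

lemma RS.sRefl_invol (hΦ : IsRootSystem Φ) {γ : E} (hγ : γ ∈ Φ) (x : E) :
    sRefl γ (sRefl γ x) = x := by
  simp only [sRefl]
  rw [inner_sub_left, real_inner_smul_left, hΦ.norm_two γ hγ]
  module

end Basic
section Coeff

variable {E : Type*} [NormedAddCommGroup E] [InnerProductSpace ℝ E] {Φ : Set E}

lemma RS.coeff_eq (B : Base Φ) {m n : E → ℤ}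
    (h : ∑ γ ∈ B.Δ, ((m γ : ℝ)) • γ = ∑ γ ∈ B.Δ, ((n γ : ℝ)) • γ) :
    ∀ γ ∈ B.Δ, m γ = n γ := by
  intro γ hγ
  have hli := Fintype.linearIndependent_iff.mp B.indep
  have hsum : ∑ i : {x : E // x ∈ B.Δ}, ((m i - n i : ℤ) : ℝ) • (i : E) = 0 := by
    rw [Finset.univ_eq_attach]
    have : ∀ i ∈ B.Δ.attach, ((m (i:E) - n (i:E) : ℤ) : ℝ) • (i : E)
        = ((m (i:E) : ℝ)) • (i:E) - ((n (i:E) : ℝ)) • (i:E) := by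
      intro i _; push_cast; rw [sub_smul]
    rw [Finset.sum_congr rfl this, Finset.sum_sub_distrib,
      Finset.sum_attach B.Δ (fun x => ((m x : ℝ)) • x),
      Finset.sum_attach B.Δ (fun x => ((n x : ℝ)) • x), h, sub_self]
  have := hli (fun i => ((m (i:E) - n (i:E) : ℤ) : ℝ)) hsum ⟨γ, hγ⟩
  have : ((m γ - n γ : ℤ) : ℝ) = 0 := this
  have : (m γ - n γ : ℤ) = 0 := by exact_mod_cast this
  omega

/-- coefficients of an integral linear combination of two roots that is a root -/
lemma RS.coeff_comb (B : Base Φ) {ξ ε η : E} (hξ : ξ ∈ Φ) (hε : ε ∈ Φ) (hη : η ∈ Φ)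
    (a b : ℤ) (h : ξ = (a : ℝ) • ε + (b : ℝ) • η) :
    ∀ γ ∈ B.Δ, B.coeff ξ γ = a * B.coeff ε γ + b * B.coeff η γ := by
  have hexp : ∑ γ ∈ B.Δ, ((B.coeff ξ γ : ℝ)) • γ
      = ∑ γ ∈ B.Δ, (((a * B.coeff ε γ + b * B.coeff η γ : ℤ) : ℝ)) • γ := by
    rw [← B.expand ξ hξ]
    calc ξ = (a:ℝ) • ε + (b:ℝ) • η := h
    _ = (a:ℝ) • ∑ γ ∈ B.Δ, ((B.coeff ε γ : ℝ)) • γ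
        + (b:ℝ) • ∑ γ ∈ B.Δ, ((B.coeff η γ : ℝ)) • γ := by
        rw [← B.expand ε hε, ← B.expand η hη]
    _ = ∑ γ ∈ B.Δ, (((a * B.coeff ε γ + b * B.coeff η γ : ℤ) : ℝ)) • γ := by
        rw [Finset.smul_sum, Finset.smul_sum, ← Finset.sum_add_distrib]
        refine Finset.sum_congr rfl fun γ _ => ?_
        push_cast
        rw [add_smul, smul_smul, smul_smul]
  exact RS.coeff_eq B hexp

open Classical in
lemma RS.coeff_simple (B : Base Φ) {γ : E} (hγ : γ ∈ B.Δ) :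
    ∀ γ' ∈ B.Δ, B.coeff γ γ' = if γ' = γ then 1 else 0 := by
  have hexp : ∑ γ' ∈ B.Δ, ((B.coeff γ γ' : ℝ)) • γ'
      = ∑ γ' ∈ B.Δ, (((if γ' = γ then 1 else 0 : ℤ) : ℝ)) • γ' := by
    rw [← B.expand γ (B.subset hγ)]
    have : ∑ γ' ∈ B.Δ, (((if γ' = γ then 1 else 0 : ℤ) : ℝ)) • γ'
        = ∑ γ' ∈ B.Δ, (if γ' = γ then γ' else 0) := by
      refine Finset.sum_congr rfl fun γ' _ => ?_
      split <;> simp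
    rw [this, Finset.sum_ite_eq' B.Δ γ (fun x => x), if_pos hγ]
  exact RS.coeff_eq B hexp

lemma RS.coeff_neg (B : Base Φ) {ε : E} (hΦ : IsRootSystem Φ) (hε : ε ∈ Φ) :
    ∀ γ ∈ B.Δ, B.coeff (-ε) γ = - B.coeff ε γ := by
  intro γ hγ
  have := RS.coeff_comb B (RS.neg_mem hΦ hε) hε hε (-1) 0 (by push_cast; module) γ hγ
  omega

lemma RS.inner_expand (B : Base Φ) {δ : E} (hδ : δ ∈ Φ) (v : E) :
    ⟪v, δ⟫_ℝ = ∑ γ ∈ B.Δ, (B.coeff δ γ : ℝ) * ⟪v, γ⟫_ℝ := by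
  conv_lhs => rw [B.expand δ hδ]
  rw [inner_sum]
  exact Finset.sum_congr rfl fun γ _ => real_inner_smul_right v γ _

end Coeff
section Stable

variable {E : Type*} [NormedAddCommGroup E] [InnerProductSpace ℝ E] {Φ : Set E}

open Classical in
/-- If a property of roots is stable under all simple reflections, and all roots satisfying it
have `α'`-coefficient at least 1, then no root satisfies it. -/
lemma RS.stable_empty (hΦ : IsRootSystem Φ) (B : Base Φ) (P : E → Prop) {α' : E}
    (hα' : α' ∈ B.Δ)
    (hstab : ∀ γ ∈ B.Δ, ∀ ε ∈ Φ, P ε → P (sRefl γ ε))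
    (hpos : ∀ ε ∈ Φ, P ε → 1 ≤ B.coeff ε α') :
    ∀ ε ∈ Φ, ¬ P ε := by
  set T : Finset E := hΦ.finite.toFinset.filter P with hT
  have hTΦ : ∀ ε ∈ T, ε ∈ Φ := by
    intro ε hε
    rw [hT, Finset.mem_filter, Set.Finite.mem_toFinset] at hε
    exact hε.1
  have hTP : ∀ ε ∈ T, P ε := by
    intro ε hε
    rw [hT, Finset.mem_filter] at hε
    exact hε.2
  have hmemT : ∀ ε ∈ Φ, P ε → ε ∈ T := by
    intro ε h1 h2
    rw [hT, Finset.mem_filter, Set.Finite.mem_toFinset]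
    exact ⟨h1, h2⟩
  have himg : ∀ γ ∈ B.Δ, ∀ ε ∈ T, sRefl γ ε ∈ T := by
    intro γ hγ ε hε
    exact hmemT _ (RS.sRefl_mem hΦ (B.subset hγ) (hTΦ ε hε)) (hstab γ hγ ε (hTΦ ε hε) (hTP ε hε))
  set u : E := ∑ ε ∈ T, ε with hu
  have hzero : ∀ γ ∈ B.Δ, ⟪u, γ⟫_ℝ = 0 := by
    intro γ hγ
    have hinj : Function.Injective (sRefl γ) :=
      Function.LeftInverse.injective (g := sRefl γ) (RS.sRefl_invol hΦ (B.subset hγ))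
    have himage : T.image (sRefl γ) = T := by
      apply Finset.eq_of_subset_of_card_le
      · intro x hx
        obtain ⟨ε, hε, rfl⟩ := Finset.mem_image.mp hx
        exact himg γ hγ ε hε
      · rw [Finset.card_image_of_injective _ hinj]
    have hsum : ∑ ε ∈ T, sRefl γ ε = u := by
      rw [hu]
      conv_rhs => rw [← himage]
      rw [Finset.sum_image (fun x _ y _ h => hinj h)]
    have hexpand : ∑ ε ∈ T, sRefl γ ε = u - (∑ ε ∈ T, ⟪ε, γ⟫_ℝ) • γ := by
      rw [hu]
      simp only [sRefl]
      rw [Finset.sum_sub_distrib, Finset.sum_smul]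
    have hγne : γ ≠ 0 := fun h => hΦ.nonzero (h ▸ B.subset hγ)
    have hs0 : (∑ ε ∈ T, ⟪ε, γ⟫_ℝ) = 0 := by
      have h1 := hexpand.symm.trans hsum
      have h2 : (∑ ε ∈ T, ⟪ε, γ⟫_ℝ) • γ = 0 := by
        have := sub_eq_self.mp h1
        exact this
      rcases smul_eq_zero.mp h2 with h | h
      · exact h
      · exact absurd h hγne
    rw [hu, sum_inner]
    exact hs0
  have hu0 : u = 0 := by
    have huu : ⟪u, u⟫_ℝ = 0 := by
      rw [hu]
      rw [inner_sum]
      refine Finset.sum_eq_zero fun ε hε => ?_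
      rw [RS.inner_expand B (hTΦ ε hε) u]
      refine Finset.sum_eq_zero fun γ hγ => ?_
      rw [hzero γ hγ, mul_zero]
    have : (∑ ε ∈ T, ε) = 0 := inner_self_eq_zero.mp (by rw [← hu]; exact huu)
    rw [hu]; exact this
  have hcoeff : (∑ ε ∈ T, B.coeff ε α') = 0 := by
    have h1 : u = ∑ γ ∈ B.Δ, (((∑ ε ∈ T, B.coeff ε γ : ℤ)) : ℝ) • γ := by
      rw [hu]
      calc ∑ ε ∈ T, ε = ∑ ε ∈ T, ∑ γ ∈ B.Δ, ((B.coeff ε γ : ℝ)) • γ :=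
            Finset.sum_congr rfl fun ε hε => B.expand ε (hTΦ ε hε)
      _ = ∑ γ ∈ B.Δ, ∑ ε ∈ T, ((B.coeff ε γ : ℝ)) • γ := Finset.sum_comm
      _ = ∑ γ ∈ B.Δ, (((∑ ε ∈ T, B.coeff ε γ : ℤ)) : ℝ) • γ := by
            refine Finset.sum_congr rfl fun γ hγ => ?_
            rw [← Finset.sum_smul]
            norm_cast
    have hexp : ∑ γ ∈ B.Δ, (((∑ ε ∈ T, B.coeff ε γ : ℤ)) : ℝ) • γ
        = ∑ γ ∈ B.Δ, (((0 : ℤ)) : ℝ) • γ := by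
      rw [← h1, hu0]
      simp
    have := RS.coeff_eq B hexp α' hα'
    simpa using this
  intro ε hε hP
  have hεT := hmemT ε hε hP
  have hTne : T.Nonempty := ⟨ε, hεT⟩
  have hge : (T.card : ℤ) ≤ ∑ ε ∈ T, B.coeff ε α' := by
    calc (T.card : ℤ) = ∑ _ε ∈ T, 1 := by simp
    _ ≤ ∑ ε ∈ T, B.coeff ε α' := Finset.sum_le_sum fun ε' hε' => hpos ε' (hTΦ ε' hε') (hTP ε' hε')
  rw [hcoeff] at hge
  have : 0 < T.card := Finset.card_pos.mpr hTne
  omega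

end Stable
section Parab

variable {E : Type*} [NormedAddCommGroup E] [InnerProductSpace ℝ E] {Φ : Set E}

/-- linearity over scalars and addition -/
def RS.IsLin (w : Function.End E) : Prop :=
  ∀ (c : ℝ) (x y : E), w (c • x + y) = c • w x + w y

lemma RS.sRefl_isLin (γ : E) : RS.IsLin (sRefl γ) := by
  intro c x y
  simp only [sRefl, inner_add_left, real_inner_smul_left]
  module

lemma RS.genBy_spec (hΦ : IsRootSystem Φ) {S : Set E} (hS : S ⊆ Φ) :
    ∀ w ∈ genBy S, RS.IsLin w ∧ (∀ x y : E, ⟪w x, w y⟫_ℝ = ⟪x, y⟫_ℝ) ∧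
      ∃ w' ∈ genBy S, w * w' = 1 ∧ w' * w = 1 := by
  intro w hw
  induction hw using Submonoid.closure_induction with
  | mem s hs =>
      obtain ⟨γ, hγS, rfl⟩ := hs
      have hγΦ : γ ∈ Φ := hS hγS
      have h2 := hΦ.norm_two γ hγΦ
      refine ⟨RS.sRefl_isLin γ, ?_, sRefl γ, Submonoid.subset_closure ⟨γ, hγS, rfl⟩, ?_, ?_⟩
      · intro x y
        show ⟪x - ⟪x,γ⟫_ℝ • γ, y - ⟪y,γ⟫_ℝ • γ⟫_ℝ = ⟪x, y⟫_ℝ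
        simp only [inner_sub_left, inner_sub_right, real_inner_smul_left,
          real_inner_smul_right, h2]
        rw [real_inner_comm γ y]
        ring
      · funext x; exact RS.sRefl_invol hΦ hγΦ x
      · funext x; exact RS.sRefl_invol hΦ hγΦ x
  | one => exact ⟨fun c x y => rfl, fun x y => rfl, 1, Submonoid.one_mem _, one_mul 1, one_mul 1⟩
  | mul v w hvm hwm hv hw =>
      obtain ⟨hvl, hvo, v', hv'm, hvv', hv'v⟩ := hv
      obtain ⟨hwl, hwo, w', hw'm, hww', hw'w⟩ := hw
      refine ⟨?_, ?_, w' * v', Submonoid.mul_mem _ hw'm hv'm, ?_, ?_⟩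
      · intro c x y
        show v (w (c • x + y)) = c • v (w x) + v (w y)
        rw [hwl, hvl]
      · intro x y
        show ⟪v (w x), v (w y)⟫_ℝ = ⟪x, y⟫_ℝ
        rw [hvo, hwo]
      · show v * (w * w') * v' = 1
        rw [hww', mul_one, hvv']
      · show w' * (v' * v) * w = 1
        rw [hv'v, mul_one, hw'w]

lemma RS.sRefl_conj {w w' : Function.End E} (hl : RS.IsLin w)
    (ho : ∀ x y : E, ⟪w x, w y⟫_ℝ = ⟪x, y⟫_ℝ) (hww' : w * w' = 1) (hw'w : w' * w = 1)
    (γ : E) : sRefl (w γ) = w * sRefl γ * w' := by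
  funext x
  have hx : w (w' x) = x := congrFun hww' x
  have hlin : w (w' x - ⟪w' x, γ⟫_ℝ • γ) = w (w' x) - ⟪w' x, γ⟫_ℝ • w γ := by
    have := hl (-⟪w' x, γ⟫_ℝ) γ (w' x)
    rw [show (-⟪w' x, γ⟫_ℝ) • γ + w' x = w' x - ⟪w' x, γ⟫_ℝ • γ by module] at this
    rw [this]
    module
  show sRefl (w γ) x = w (sRefl γ (w' x))
  rw [RS.sRefl_apply, RS.sRefl_apply, hlin, hx]
  congr 2
  rw [← ho (w' x) γ, hx]

open Classical in
lemma RS.exists_rep (hΦ : IsRootSystem Φ) (B : Base Φ) {α : E} (hα : α ∈ B.Δ) :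
    ∀ n : ℕ, ∀ η ∈ Φ, (∀ γ ∈ B.Δ, 0 ≤ B.coeff η γ) → B.coeff η α = 0 →
      (∑ γ ∈ B.Δ, B.coeff η γ) = (n : ℤ) →
      ∃ w ∈ genBy ((↑B.Δ : Set E) \ {α}), ∃ γ₀ ∈ B.Δ, γ₀ ≠ α ∧ η = w γ₀ := by
  intro n
  induction n using Nat.strong_induction_on with
  | _ n IH =>
    intro η hη hpos h0 hsum
    -- find a simple root pairing positively with η and with positive coefficient
    have hηη := hΦ.norm_two η hη
    have hex : ∃ γ ∈ B.Δ, 0 < B.coeff η γ ∧ 0 < ⟪η, γ⟫_ℝ := by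
      by_contra hcon
      push_neg at hcon
      have : ⟪η, η⟫_ℝ ≤ 0 := by
        rw [RS.inner_expand B hη η]
        refine Finset.sum_nonpos fun γ hγ => ?_
        rcases lt_or_ge 0 (B.coeff η γ) with h | h
        · have := hcon γ hγ h
          have hc : (0:ℝ) ≤ (B.coeff η γ : ℝ) := by exact_mod_cast le_of_lt h
          exact mul_nonpos_of_nonneg_of_nonpos hc this
        · have h' : B.coeff η γ = 0 := le_antisymm h (hpos γ hγ)
          rw [h']; simp
      rw [hηη] at this; linarith
    obtain ⟨γ₀, hγ₀Δ, hc₀, hip₀⟩ := hex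
    have hγ₀Φ : γ₀ ∈ B.Δ := hγ₀Δ
    have hγ₀α : γ₀ ≠ α := fun h => by rw [h, h0] at hc₀; omega
    obtain ⟨k, hk, hk1, hk2⟩ := RS.inner_int hΦ hη (B.subset hγ₀Δ)
    have hkpos : 0 < k := by
      have : (0:ℝ) < (k:ℝ) := hk ▸ hip₀
      exact_mod_cast this
    rcases eq_or_ne η γ₀ with rfl | hne
    · exact ⟨1, Submonoid.one_mem _, η, hγ₀Δ, hγ₀α, rfl⟩
    · have hk1' : k = 1 := by
        rcases lt_or_ge k 2 with h | h
        · omega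
        · have : k = 2 := by omega
          rw [this] at hk
          exact absurd (RS.eq_of_inner_two hΦ hη (B.subset hγ₀Δ) (by exact_mod_cast hk)) hne
      have hip1 : ⟪η, γ₀⟫_ℝ = 1 := by rw [hk, hk1']; norm_num
      have hη' : η - γ₀ ∈ Φ := RS.sub_mem hΦ hη (B.subset hγ₀Δ) hip1
      have hcoeff' : ∀ γ ∈ B.Δ, B.coeff (η - γ₀) γ
          = B.coeff η γ - (if γ = γ₀ then 1 else 0) := by
        intro γ hγ
        have := RS.coeff_comb B hη' hη (B.subset hγ₀Δ) 1 (-1)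
          (by push_cast; module) γ hγ
        rw [this, RS.coeff_simple B hγ₀Δ γ hγ]
        ring
      -- η - γ₀ is a positive root
      have hpos' : ∀ γ ∈ B.Δ, 0 ≤ B.coeff (η - γ₀) γ := by
        rcases B.sign (η - γ₀) hη' with h | h
        · exact h
        · exfalso
          apply hne
          -- all coefficients of η - γ₀ are ≤ 0 and ≥ related; conclude η = γ₀
          have hall : ∀ γ ∈ B.Δ, B.coeff η γ = (if γ = γ₀ then 1 else 0) := by
            intro γ hγ
            have h1 := h γ hγ
            rw [hcoeff' γ hγ] at h1
            have h2 := hpos γ hγ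
            by_cases hgg : γ = γ₀
            · rw [if_pos hgg]
              rw [if_pos hgg] at h1
              subst hgg
              omega
            · rw [if_neg hgg]
              rw [if_neg hgg] at h1
              omega
          have := B.expand η hη
          rw [this]
          have : ∀ γ ∈ B.Δ, ((B.coeff η γ : ℝ)) • γ = (if γ = γ₀ then γ else 0) := by
            intro γ hγ
            rw [hall γ hγ]
            split <;> simp
          rw [Finset.sum_congr rfl this, Finset.sum_ite_eq' B.Δ γ₀ (fun x => x), if_pos hγ₀Δ]
      have h0' : B.coeff (η - γ₀) α = 0 := by
        rw [hcoeff' α hα, if_neg (fun h => hγ₀α h.symm), h0]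
        ring
      have hsum' : (∑ γ ∈ B.Δ, B.coeff (η - γ₀) γ) = ((n - 1 : ℕ) : ℤ) := by
        have h1 : ∑ γ ∈ B.Δ, B.coeff (η - γ₀) γ
            = (∑ γ ∈ B.Δ, B.coeff η γ) - ∑ γ ∈ B.Δ, (if γ = γ₀ then (1:ℤ) else 0) := by
          rw [← Finset.sum_sub_distrib]
          exact Finset.sum_congr rfl hcoeff'
        rw [h1, Finset.sum_ite_eq' B.Δ γ₀ (fun _ => (1:ℤ)), if_pos hγ₀Δ, hsum]
        have hn : 1 ≤ n := by
          by_contra hn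
          have : n = 0 := by omega
          rw [this] at hsum
          norm_num at hsum
          have := Finset.sum_eq_zero_iff_of_nonneg (fun γ hγ => hpos γ hγ) |>.mp hsum γ₀ hγ₀Δ
          omega
        push_cast
        omega
      obtain ⟨w, hwm, γ₁, hγ₁Δ, hγ₁α, hrep⟩ :=
        IH (n-1) (by
          have hn : 1 ≤ n := by
            by_contra hn
            have : n = 0 := by omega
            rw [this] at hsum
            norm_num at hsum
            have := Finset.sum_eq_zero_iff_of_nonneg (fun γ hγ => hpos γ hγ) |>.mp hsum γ₀ hγ₀Δ
            omega
          omega) (η - γ₀) hη' hpos' h0' hsum'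
      refine ⟨sRefl γ₀ * w, Submonoid.mul_mem _
        (Submonoid.subset_closure ⟨γ₀, ⟨hγ₀Δ, hγ₀α⟩, rfl⟩) hwm, γ₁, hγ₁Δ, hγ₁α, ?_⟩
      show η = sRefl γ₀ (w γ₁)
      rw [← hrep, RS.sRefl_apply]
      have : ⟪η - γ₀, γ₀⟫_ℝ = -1 := by
        rw [inner_sub_left, hip1, hΦ.norm_two γ₀ (B.subset hγ₀Δ)]
        ring
      rw [this]
      module

lemma RS.sRefl_mem_parabolic (hΦ : IsRootSystem Φ) (B : Base Φ) {α : E} (hα : α ∈ B.Δ)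
    {η : E} (hη : η ∈ Φ) (h0 : B.coeff η α = 0) :
    sRefl η ∈ genBy ((↑B.Δ : Set E) \ {α}) := by
  have hSΦ : ((↑B.Δ : Set E) \ {α}) ⊆ Φ := fun x hx => B.subset hx.1
  -- reduce to positive roots
  have main : ∀ η ∈ Φ, (∀ γ ∈ B.Δ, 0 ≤ B.coeff η γ) → B.coeff η α = 0 →
      sRefl η ∈ genBy ((↑B.Δ : Set E) \ {α}) := by
    intro η hη hpos h0
    have hnn : 0 ≤ ∑ γ ∈ B.Δ, B.coeff η γ := Finset.sum_nonneg hpos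
    obtain ⟨n, hn⟩ := Int.eq_ofNat_of_zero_le hnn
    obtain ⟨w, hwm, γ₀, hγ₀Δ, hγ₀α, hrep⟩ := RS.exists_rep hΦ B hα n η hη hpos h0 hn
    obtain ⟨hl, ho, w', hw'm, hww', hw'w⟩ := RS.genBy_spec hΦ hSΦ w hwm
    rw [hrep, RS.sRefl_conj hl ho hww' hw'w γ₀]
    exact Submonoid.mul_mem _ (Submonoid.mul_mem _ hwm
      (Submonoid.subset_closure ⟨γ₀, ⟨hγ₀Δ, hγ₀α⟩, rfl⟩)) hw'm
  rcases B.sign η hη with h | h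
  · exact main η hη h h0
  · have hneg : -η ∈ Φ := RS.neg_mem hΦ hη
    have hposneg : ∀ γ ∈ B.Δ, 0 ≤ B.coeff (-η) γ := by
      intro γ hγ
      rw [RS.coeff_neg B hΦ hη γ hγ]
      have := h γ hγ
      omega
    have h0neg : B.coeff (-η) α = 0 := by rw [RS.coeff_neg B hΦ hη α hα, h0]; ring
    have : sRefl (-η) = sRefl η := by
      funext x
      simp only [sRefl, inner_neg_right, smul_neg, neg_smul, neg_neg]
    rw [← this]
    exact main (-η) hneg hposneg h0neg

end Parab
section SimplePair

variable {E : Type*} [NormedAddCommGroup E] [InnerProductSpace ℝ E] {Φ : Set E}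

/-- distinct simple roots pair to `0` or `-1` -/
lemma RS.simple_inner (hΦ : IsRootSystem Φ) (B : Base Φ) {γ γ' : E}
    (hγ : γ ∈ B.Δ) (hγ' : γ' ∈ B.Δ) (hne : γ ≠ γ') :
    ⟪γ, γ'⟫_ℝ = 0 ∨ ⟪γ, γ'⟫_ℝ = -1 := by
  classical
  have hγΦ := B.subset hγ
  have hγ'Φ := B.subset hγ'
  obtain ⟨k, hk, hk1, hk2⟩ := RS.inner_int hΦ hγΦ hγ'Φ
  interval_cases k
  · -- k = -2 : γ = -γ', contradiction on coefficients
    exfalso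
    have heq : γ = -γ' := RS.eq_neg_of_inner_neg_two hΦ hγΦ hγ'Φ (by rw [hk]; norm_num)
    have h1 : B.coeff γ γ = 1 := by rw [RS.coeff_simple B hγ γ hγ]; simp
    have h2 : B.coeff γ γ = - B.coeff γ' γ := by
      have := RS.coeff_comb B hγΦ hγ'Φ hγ'Φ (-1) 0 (by push_cast; rw [heq]; module) γ hγ
      omega
    have h3 : B.coeff γ' γ = 0 := by
      rw [RS.coeff_simple B hγ' γ hγ, if_neg hne]
    omega
  · right; rw [hk]; norm_num
  · left; rw [hk]; norm_num
  · -- k = 1 : γ - γ' is a root with coefficients of mixed signs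
    exfalso
    have hsub : γ - γ' ∈ Φ := RS.sub_mem hΦ hγΦ hγ'Φ (by rw [hk]; norm_num)
    have hcc : ∀ γ'' ∈ B.Δ, B.coeff (γ - γ') γ''
        = (if γ'' = γ then 1 else 0) - (if γ'' = γ' then 1 else 0) := by
      intro γ'' hγ''
      have := RS.coeff_comb B hsub hγΦ hγ'Φ 1 (-1) (by push_cast; module) γ'' hγ''
      rw [this, RS.coeff_simple B hγ γ'' hγ'', RS.coeff_simple B hγ' γ'' hγ'']
      ring
    rcases B.sign (γ - γ') hsub with h | h
    · have := h γ' hγ'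
      rw [hcc γ' hγ', if_neg (fun hh => hne hh.symm), if_pos rfl] at this
      omega
    · have := h γ hγ
      rw [hcc γ hγ, if_pos rfl, if_neg (fun hh => hne.symm hh.symm)] at this
      omega
  · -- k = 2 : γ = γ'
    exfalso
    exact hne (RS.eq_of_inner_two hΦ hγΦ hγ'Φ (by rw [hk]; norm_num))

end SimplePair

/-- For an extreme Heisenberg simple root `α` with neighbour `β`, there is an involution `w`
in the subgroup of the Weyl group generated by the simple reflections in the simple roots
other than `α` with `w(α) = θ - α - β`. -/
theorem exists_involution_conj_alpha_heisenberg
    (hΦ : IsRootSystem Φ) (hirr : IsIrreducible Φ) (B : Base Φ)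
    {θ α β : E} (hθ : IsHighest B θ) (hα : α ∈ B.Δ)
    (hext : IsExtreme B α β) (hH : IsHeisenberg B θ α) :
    ∃ w ∈ genBy ((↑B.Δ : Set E) \ {α}), w * w = 1 ∧ w α = θ - α - β := by
  classical
  have hαΦ : α ∈ Φ := B.subset hα
  have hβΔ : β ∈ B.Δ := hext.1
  have hβΦ : β ∈ Φ := B.subset hβΔ
  have hβα : β ≠ α := hext.2.1
  have hαβne : α ≠ β := fun h => hβα h.symm
  have h2α : ⟪α, α⟫_ℝ = 2 := hΦ.norm_two α hαΦ
  have h2β : ⟪β, β⟫_ℝ = 2 := hΦ.norm_two β hβΦ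
  have hθΦ : θ ∈ Φ := hθ.1
  have h2θ : ⟪θ, θ⟫_ℝ = 2 := hΦ.norm_two θ hθΦ
  have hcθα : B.coeff θ α = 2 := hH.1
  -- coefficient helpers
  have hcadd : ∀ ε η : E, ε ∈ Φ → η ∈ Φ → ε + η ∈ Φ → ∀ γ ∈ B.Δ,
      B.coeff (ε + η) γ = B.coeff ε γ + B.coeff η γ := by
    intro ε η h1 h2 h3 γ hγ
    have := RS.coeff_comb B h3 h1 h2 1 1 (by push_cast; module) γ hγ
    omega
  have hcsub : ∀ ε η : E, ε ∈ Φ → η ∈ Φ → ε - η ∈ Φ → ∀ γ ∈ B.Δ,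
      B.coeff (ε - η) γ = B.coeff ε γ - B.coeff η γ := by
    intro ε η h1 h2 h3 γ hγ
    have := RS.coeff_comb B h3 h1 h2 1 (-1) (by push_cast; module) γ hγ
    omega
  have hcαα : B.coeff α α = 1 := by rw [RS.coeff_simple B hα α hα]; simp
  have hcβα : B.coeff β α = 0 := by rw [RS.coeff_simple B hβΔ α hα, if_neg hαβne]
  have hcγα : ∀ γ ∈ B.Δ, γ ≠ α → B.coeff γ α = 0 := by
    intro γ hγ hne
    rw [RS.coeff_simple B hγ α hα, if_neg (fun h => hne h.symm)]
  -- simple pairings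
  have hαβ : ⟪α, β⟫_ℝ = -1 :=
    (RS.simple_inner hΦ B hα hβΔ hαβne).resolve_left hext.2.2.1
  have hβαip : ⟪β, α⟫_ℝ = -1 := by rw [real_inner_comm]; exact hαβ
  have hγorth : ∀ γ ∈ B.Δ, γ ≠ α → γ ≠ β → ⟪α, γ⟫_ℝ = 0 := by
    intro γ hγ h1 h2
    by_contra h
    exact h2 (hext.2.2.2 γ hγ h1 h)
  -- every root has α-coefficient at most 2, and θ is the only root with α-coefficient 2
  have hbound : ∀ ε ∈ Φ, B.coeff ε α ≤ 2 := by
    intro ε hε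
    have := hθ.2 ε hε α hα
    omega
  have huniq2 : ∀ ε ∈ Φ, B.coeff ε α = 2 → ε = θ := by
    intro ε hε h2
    by_contra hne
    rcases eq_or_ne ε (-θ) with rfl | hne2
    · have := RS.coeff_neg B hΦ hθΦ α hα
      omega
    · rcases hH.2 ε hε hne hne2 with h | h | h <;> omega
  -- θ is orthogonal to all simple roots other than α
  have hθγ : ∀ γ ∈ B.Δ, γ ≠ α → ⟪θ, γ⟫_ℝ = 0 := by
    intro γ hγ hne
    have hγΦ := B.subset hγ
    obtain ⟨k, hk, hk1, hk2⟩ := RS.inner_int hΦ hθΦ hγΦ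
    interval_cases k
    · exfalso
      have heq : θ = -γ := RS.eq_neg_of_inner_neg_two hΦ hθΦ hγΦ (by rw [hk]; norm_num)
      have h1 : B.coeff θ α = - B.coeff γ α := by
        have := RS.coeff_comb B hθΦ hγΦ hγΦ (-1) 0 (by push_cast; rw [heq]; module) α hα
        omega
      have := hcγα γ hγ hne
      omega
    · exfalso
      have hadd : θ + γ ∈ Φ := RS.add_mem hΦ hθΦ hγΦ (by rw [hk]; norm_num)
      have h1 := hcadd θ γ hθΦ hγΦ hadd γ hγ
      have h2 : B.coeff γ γ = 1 := by rw [RS.coeff_simple B hγ γ hγ]; simp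
      have := hθ.2 (θ + γ) hadd γ hγ
      omega
    · rw [hk]; norm_num
    · exfalso
      have hsub : θ - γ ∈ Φ := RS.sub_mem hΦ hθΦ hγΦ (by rw [hk]; norm_num)
      have h1 := hcsub θ γ hθΦ hγΦ hsub α hα
      rw [hcθα, hcγα γ hγ hne] at h1
      have heq := huniq2 (θ - γ) hsub (by omega)
      have hγ0 : γ = 0 := sub_eq_self.mp heq
      exact hΦ.nonzero (hγ0 ▸ hγΦ)
    · exfalso
      have heq : θ = γ := RS.eq_of_inner_two hΦ hθΦ hγΦ (by rw [hk]; norm_num)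
      have := hcγα γ hγ hne
      rw [← heq] at this
      omega
  have hθα : ⟪θ, α⟫_ℝ = 1 := by
    have h2' : (2:ℝ) = ∑ γ ∈ B.Δ, (B.coeff θ γ : ℝ) * ⟪θ, γ⟫_ℝ := by
      rw [← RS.inner_expand B hθΦ θ, h2θ]
    rw [Finset.sum_eq_single_of_mem α hα (fun γ hγ hne => by
      rw [hθγ γ hγ hne, mul_zero])] at h2'
    rw [hcθα] at h2'
    push_cast at h2'
    linarith
  have hαθip : ⟪α, θ⟫_ℝ = 1 := by rw [real_inner_comm]; exact hθα
  have hθβ : ⟪θ, β⟫_ℝ = 0 := hθγ β hβΔ hβα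
  have hβθip : ⟪β, θ⟫_ℝ = 0 := by rw [real_inner_comm]; exact hθβ
  -- δ = θ - α - β is a root
  have hθmαΦ : θ - α ∈ Φ := RS.sub_mem hΦ hθΦ hαΦ hθα
  have hdΦ : θ - α - β ∈ Φ := by
    refine RS.sub_mem hΦ hθmαΦ hβΦ ?_
    rw [inner_sub_left, hθβ, hαβ]; ring
  have h2d : ⟪θ - α - β, θ - α - β⟫_ℝ = 2 := hΦ.norm_two _ hdΦ
  -- coefficients of θ - α and δ
  have hcθmαα : B.coeff (θ - α) α = 1 := by
    rw [hcsub θ α hθΦ hαΦ hθmαΦ α hα, hcθα, hcαα]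
    ring
  have hcdα : B.coeff (θ - α - β) α = 1 := by
    rw [hcsub (θ - α) β hθmαΦ hβΦ hdΦ α hα, hcθmαα, hcβα]
    ring
  -- inner products with δ
  have hdα : ⟪θ - α - β, α⟫_ℝ = 0 := by
    rw [inner_sub_left, inner_sub_left, hθα, h2α, hβαip]; ring
  have hαd : ⟪α, θ - α - β⟫_ℝ = 0 := by rw [real_inner_comm]; exact hdα
  have hdβ : ⟪θ - α - β, β⟫_ℝ = -1 := by
    rw [inner_sub_left, inner_sub_left, hθβ, hαβ, h2β]; ring
  have hβd : ⟪β, θ - α - β⟫_ℝ = -1 := by rw [real_inner_comm]; exact hdβ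
  have hdθ : ⟪θ - α - β, θ⟫_ℝ = 1 := by
    rw [inner_sub_left, inner_sub_left, h2θ, hαθip, hβθip]; ring
  have hθd : ⟪θ, θ - α - β⟫_ℝ = 1 := by rw [real_inner_comm]; exact hdθ
  have hθmαd : ⟪θ - α, θ - α - β⟫_ℝ = 1 := by
    rw [inner_sub_left, hθd, hαd]; ring
  have hθmαα : ⟪θ - α, α⟫_ℝ = -1 := by
    rw [inner_sub_left, hθα, h2α]; ring
  have hγd : ∀ γ ∈ B.Δ, γ ≠ α → γ ≠ β → ⟪γ, θ - α - β⟫_ℝ = -⟪γ, β⟫_ℝ := by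
    intro γ hγ h1 h2
    rw [inner_sub_right, inner_sub_right, real_inner_comm θ γ, hθγ γ hγ h1,
      real_inner_comm α γ, hγorth γ hγ h1 h2]
    ring
  -- Lemma G: no root with α-coefficient 1 is orthogonal to θ
  have hT : ∀ ε ∈ Φ, B.coeff ε α = 1 → ⟪ε, θ⟫_ℝ ≠ 0 := by
    intro ε₀ hε₀ hc₀ hip₀
    refine RS.stable_empty hΦ B (fun ε => B.coeff ε α = 1 ∧ ⟪ε, θ⟫_ℝ = 0) hα ?_
      (fun ε hε h => h.1.ge) ε₀ hε₀ ⟨hc₀, hip₀⟩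
    rintro γ hγ ε hε ⟨hc, hip⟩
    have hγΦ := B.subset hγ
    obtain ⟨k, hk, hk1, hk2⟩ := RS.inner_int hΦ hε hγΦ
    by_cases hγα : γ = α
    · rw [hγα] at hk ⊢
      have hz : ⟪ε, α⟫_ℝ = 0 := by
        interval_cases k
        · exfalso
          have heq : ε = -α := RS.eq_neg_of_inner_neg_two hΦ hε hαΦ (by rw [hk]; norm_num)
          have h1 : B.coeff ε α = -1 * B.coeff α α + 0 * B.coeff α α :=
            RS.coeff_comb B hε hαΦ hαΦ (-1) 0 (by push_cast; rw [heq]; module) α hα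
          omega
        · exfalso
          have hadd : ε + α ∈ Φ := RS.add_mem hΦ hε hαΦ (by rw [hk]; norm_num)
          have h1 := hcadd ε α hε hαΦ hadd α hα
          have heq := huniq2 (ε + α) hadd (by omega)
          have hεθ : ε = θ - α := eq_sub_of_add_eq heq
          rw [hεθ, inner_sub_left, h2θ, hαθip] at hip
          linarith
        · rw [hk]; norm_num
        · exfalso
          have hsub : ε - α ∈ Φ := RS.sub_mem hΦ hε hαΦ (by rw [hk]; norm_num)
          have hipξ : ⟪θ, ε - α⟫_ℝ = -1 := by
            rw [inner_sub_right, hθα, show ⟪θ,ε⟫_ℝ = 0 from by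
              rw [real_inner_comm]; exact hip]
            ring
          have hadd : θ + (ε - α) ∈ Φ := RS.add_mem hΦ hθΦ hsub hipξ
          have h1 := hcadd θ (ε - α) hθΦ hsub hadd α hα
          have h2 := hcsub ε α hε hαΦ hsub α hα
          have heq := huniq2 (θ + (ε - α)) hadd (by omega)
          have h0 : ε - α = 0 := by
            have := heq
            rwa [add_eq_left] at this
          exact hΦ.nonzero (h0 ▸ hsub)
        · exfalso
          have heq : ε = α := RS.eq_of_inner_two hΦ hε hαΦ (by rw [hk]; norm_num)
          rw [heq, hαθip] at hip
          linarith
      have hfix : sRefl α ε = ε := by rw [RS.sRefl_apply, hz]; simp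
      rw [hfix]
      exact ⟨hc, hip⟩
    · constructor
      · have himg : sRefl γ ε ∈ Φ := RS.sRefl_mem hΦ hγΦ hε
        have hcomb := RS.coeff_comb B himg hε hγΦ 1 (-k)
          (by rw [RS.sRefl_apply, hk]; push_cast; module) α hα
        rw [hcomb, hc, hcγα γ hγ hγα]
        ring
      · rw [RS.sRefl_apply, inner_sub_left, hip, real_inner_smul_left,
          show ⟪γ,θ⟫_ℝ = 0 from by rw [real_inner_comm]; exact hθγ γ hγ hγα]
        ring
  -- key existence: there is a root ζ with α-coefficient 1 of type (0,0) or (1,1)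
  have hH2 : ∃ ζ ∈ Φ, B.coeff ζ α = 1 ∧
      ((⟪ζ, α⟫_ℝ = 0 ∧ ⟪ζ, θ - α - β⟫_ℝ = 0) ∨ (⟪ζ, α⟫_ℝ = 1 ∧ ⟪ζ, θ - α - β⟫_ℝ = 1)) := by
    by_contra hnH
    refine RS.stable_empty hΦ B
      (fun ε => (B.coeff ε α = 1 ∧ (⟪ε, θ - α - β⟫_ℝ - ⟪ε, α⟫_ℝ = 1 ∨
        ⟪ε, θ - α - β⟫_ℝ - ⟪ε, α⟫_ℝ = 2)) ∨ ε = θ) hα ?_ ?_ θ hθΦ (Or.inr rfl)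
    swap
    · rintro ε hε (⟨hc, _⟩ | rfl)
      · exact hc.ge
      · omega
    rintro γ hγ ε hε (⟨hc, hv⟩ | hεθ)
    · -- generic element with value 1 or 2
      by_cases hγα : γ = α
      · rw [hγα]
        obtain ⟨k, hk, hk1, hk2⟩ := RS.inner_int hΦ hε hαΦ
        obtain ⟨j, hj, hj1, hj2⟩ := RS.inner_int hΦ hε hdΦ
        have hv' : j - k = 1 ∨ j - k = 2 := by
          rcases hv with h | h
          · left
            have : (j:ℝ) - (k:ℝ) = 1 := by rw [← hj, ← hk]; exact h
            exact_mod_cast this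
          · right
            have : (j:ℝ) - (k:ℝ) = 2 := by rw [← hj, ← hk]; exact h
            exact_mod_cast this
        interval_cases k
        · exfalso
          have heq : ε = -α := RS.eq_neg_of_inner_neg_two hΦ hε hαΦ (by rw [hk]; norm_num)
          have h1 : B.coeff ε α = -1 * B.coeff α α + 0 * B.coeff α α :=
            RS.coeff_comb B hε hαΦ hαΦ (-1) 0 (by push_cast; rw [heq]; module) α hα
          omega
        · -- ⟪ε,α⟫ = -1 : then ε = θ - α and the reflection is θ
          have hadd : ε + α ∈ Φ := RS.add_mem hΦ hε hαΦ (by rw [hk]; norm_num)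
          have h1 := hcadd ε α hε hαΦ hadd α hα
          have heq := huniq2 (ε + α) hadd (by omega)
          have himg : sRefl α ε = θ := by
            rw [RS.sRefl_apply, hk, ← heq]
            push_cast
            module
          rw [himg]
          exact Or.inr rfl
        · -- ⟪ε,α⟫ = 0 : fixed
          have hfix : sRefl α ε = ε := by rw [RS.sRefl_apply, hk]; push_cast; simp
          rw [hfix]
          exact Or.inl ⟨hc, hv⟩
        · -- ⟪ε,α⟫ = 1 : impossible
          exfalso
          have hj' : j = 2 := by omega
          have heq : ε = θ - α - β :=
            RS.eq_of_inner_two hΦ hε hdΦ (by rw [hj, hj']; norm_num)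
          rw [heq, hdα] at hk
          norm_num at hk
        · -- ⟪ε,α⟫ = 2 : ε = α, impossible
          exfalso
          have heq : ε = α := RS.eq_of_inner_two hΦ hε hαΦ (by rw [hk]; norm_num)
          rw [heq, hαd] at hj
          have : j = 0 := by exact_mod_cast hj.symm
          omega
      · -- γ ≠ α
        have hγΦ := B.subset hγ
        obtain ⟨k, hk, hk1, hk2⟩ := RS.inner_int hΦ hε hγΦ
        have himgΦ : sRefl γ ε ∈ Φ := RS.sRefl_mem hΦ hγΦ hε
        have hc' : B.coeff (sRefl γ ε) α = 1 := by
          have hcomb := RS.coeff_comb B himgΦ hε hγΦ 1 (-k)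
            (by rw [RS.sRefl_apply, hk]; push_cast; module) α hα
          rw [hcomb, hc, hcγα γ hγ hγα]
          ring
        by_cases hγβ : γ = β
        · -- γ = β : value unchanged
          rw [hγβ] at hk ⊢
          have ed : ⟪sRefl β ε, θ - α - β⟫_ℝ = ⟪ε, θ - α - β⟫_ℝ + k := by
            rw [RS.sRefl_apply, inner_sub_left, real_inner_smul_left, hβd, hk]
            ring
          have ea : ⟪sRefl β ε, α⟫_ℝ = ⟪ε, α⟫_ℝ + k := by
            rw [RS.sRefl_apply, inner_sub_left, real_inner_smul_left, hβαip, hk]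
            ring
          rw [hγβ] at hc'
          refine Or.inl ⟨hc', ?_⟩
          rcases hv with h | h
          · left; rw [ed, ea]; linarith
          · right; rw [ed, ea]; linarith
        · -- γ ∉ {α, β}
          have hαγ : ⟪α, γ⟫_ℝ = 0 := hγorth γ hγ hγα hγβ
          have hγαip : ⟪γ, α⟫_ℝ = 0 := by rw [real_inner_comm]; exact hαγ
          rcases RS.simple_inner hΦ B hγ hβΔ hγβ with ht | ht
          · -- ⟪γ,β⟫ = 0 : value unchanged
            have hγdip : ⟪γ, θ - α - β⟫_ℝ = 0 := by rw [hγd γ hγ hγα hγβ, ht]; ring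
            have ed : ⟪sRefl γ ε, θ - α - β⟫_ℝ = ⟪ε, θ - α - β⟫_ℝ := by
              rw [RS.sRefl_apply, inner_sub_left, real_inner_smul_left, hγdip]
              ring
            have ea : ⟪sRefl γ ε, α⟫_ℝ = ⟪ε, α⟫_ℝ := by
              rw [RS.sRefl_apply, inner_sub_left, real_inner_smul_left, hγαip]
              ring
            refine Or.inl ⟨hc', ?_⟩
            rw [ed, ea]
            exact hv
          · -- ⟪γ,β⟫ = -1, so ⟪γ, δ⟫ = 1
            have hγdip : ⟪γ, θ - α - β⟫_ℝ = 1 := by rw [hγd γ hγ hγα hγβ, ht]; ring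
            have ed : ⟪sRefl γ ε, θ - α - β⟫_ℝ = ⟪ε, θ - α - β⟫_ℝ - k := by
              rw [RS.sRefl_apply, inner_sub_left, real_inner_smul_left, hγdip, hk]
              ring
            have ea : ⟪sRefl γ ε, α⟫_ℝ = ⟪ε, α⟫_ℝ := by
              rw [RS.sRefl_apply, inner_sub_left, real_inner_smul_left, hγαip]
              ring
            obtain ⟨m, hm, hm1, hm2⟩ := RS.inner_int hΦ hε hαΦ
            obtain ⟨j, hj, hj1, hj2⟩ := RS.inner_int hΦ hε hdΦ
            have hv' : j - m = 1 ∨ j - m = 2 := by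
              rcases hv with h | h
              · left
                have : (j:ℝ) - (m:ℝ) = 1 := by rw [← hj, ← hm]; exact h
                exact_mod_cast this
              · right
                have : (j:ℝ) - (m:ℝ) = 2 := by rw [← hj, ← hm]; exact h
                exact_mod_cast this
            interval_cases k
            · -- k = -2 : ε = -γ, coefficient contradiction
              exfalso
              have heq : ε = -γ := RS.eq_neg_of_inner_neg_two hΦ hε hγΦ (by rw [hk]; norm_num)
              have h1 : B.coeff ε α = -1 * B.coeff γ α + 0 * B.coeff γ α :=
                RS.coeff_comb B hε hγΦ hγΦ (-1) 0 (by push_cast; rw [heq]; module) α hα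
              have := hcγα γ hγ hγα
              omega
            · -- k = -1 : value increases by 1
              rcases hv' with hcase | hcase
              · refine Or.inl ⟨hc', Or.inr ?_⟩
                rw [ed, ea, hj, hm]
                have hc1 : (j:ℝ) - (m:ℝ) = 1 := by exact_mod_cast hcase
                push_cast
                linarith
              · -- value 2 and k = -1 : impossible
                exfalso
                interval_cases m
                · have heq : ε = -α := RS.eq_neg_of_inner_neg_two hΦ hε hαΦ (by rw [hm]; norm_num)
                  have h1 : B.coeff ε α = -1 * B.coeff α α + 0 * B.coeff α α :=
                    RS.coeff_comb B hε hαΦ hαΦ (-1) 0 (by push_cast; rw [heq]; module) α hα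
                  omega
                · have hadd : ε + α ∈ Φ := RS.add_mem hΦ hε hαΦ (by rw [hm]; norm_num)
                  have h1 := hcadd ε α hε hαΦ hadd α hα
                  have heq := huniq2 (ε + α) hadd (by omega)
                  have hεθ : ε = θ - α := eq_sub_of_add_eq heq
                  rw [hεθ, inner_sub_left, hθγ γ hγ hγα, hαγ] at hk
                  norm_num at hk
                · have hj' : j = 2 := by omega
                  have heq : ε = θ - α - β :=
                    RS.eq_of_inner_two hΦ hε hdΦ (by rw [hj, hj']; norm_num)
                  rw [heq] at hk
                  rw [show ⟪θ - α - β, γ⟫_ℝ = 1 from by rw [real_inner_comm]; exact hγdip] at hk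
                  norm_num at hk
                · omega
                · have heq : ε = α := RS.eq_of_inner_two hΦ hε hαΦ (by rw [hm]; norm_num)
                  rw [heq, hαd] at hj
                  have : j = 0 := by exact_mod_cast hj.symm
                  omega
            · -- k = 0 : fixed
              have hfix : sRefl γ ε = ε := by rw [RS.sRefl_apply, hk]; push_cast; simp
              rw [hfix]
              exact Or.inl ⟨hc, hv⟩
            · -- k = 1 : value decreases by 1
              rcases hv' with hcase | hcase
              · -- value 1 becomes 0 : contradicts hnH
                exfalso
                interval_cases m
                · have heq : ε = -α := RS.eq_neg_of_inner_neg_two hΦ hε hαΦ (by rw [hm]; norm_num)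
                  have h1 : B.coeff ε α = -1 * B.coeff α α + 0 * B.coeff α α :=
                    RS.coeff_comb B hε hαΦ hαΦ (-1) 0 (by push_cast; rw [heq]; module) α hα
                  omega
                · have hadd : ε + α ∈ Φ := RS.add_mem hΦ hε hαΦ (by rw [hm]; norm_num)
                  have h1 := hcadd ε α hε hαΦ hadd α hα
                  have heq := huniq2 (ε + α) hadd (by omega)
                  have hεθ : ε = θ - α := eq_sub_of_add_eq heq
                  rw [hεθ, inner_sub_left, hθγ γ hγ hγα, hαγ] at hk
                  norm_num at hk
                · -- m = 0, j = 1 : the reflected root is of type (0,0)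
                  have hj' : j = 1 := by omega
                  refine hnH ⟨sRefl γ ε, himgΦ, hc', Or.inl ⟨?_, ?_⟩⟩
                  · rw [ea, hm]; norm_num
                  · rw [ed, hj, hj']; norm_num
                · -- m = 1, j = 2 : ε = δ, contradiction
                  have hj' : j = 2 := by omega
                  have heq : ε = θ - α - β :=
                    RS.eq_of_inner_two hΦ hε hdΦ (by rw [hj, hj']; norm_num)
                  rw [heq, hdα] at hm
                  norm_num at hm
                · have heq : ε = α := RS.eq_of_inner_two hΦ hε hαΦ (by rw [hm]; norm_num)
                  rw [heq, hαγ] at hk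
                  norm_num at hk
              · -- value 2 becomes 1
                refine Or.inl ⟨hc', Or.inl ?_⟩
                rw [ed, ea]
                rcases hv with h | h
                · exfalso
                  have : (j:ℝ) - (m:ℝ) = 1 := by rw [← hj, ← hm]; exact h
                  have : j - m = 1 := by exact_mod_cast this
                  omega
                · push_cast
                  linarith
            · -- k = 2 : ε = γ, coefficient contradiction
              exfalso
              have heq : ε = γ := RS.eq_of_inner_two hΦ hε hγΦ (by rw [hk]; norm_num)
              have := hcγα γ hγ hγα
              rw [← heq] at this
              omega
    · -- ε = θ
      rw [hεθ]
      by_cases hγα : γ = α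
      · rw [hγα]
        have himg : sRefl α θ = θ - α := by rw [RS.sRefl_apply, hθα, one_smul]
        rw [himg]
        refine Or.inl ⟨hcθmαα, Or.inr ?_⟩
        rw [hθmαd, hθmαα]
        ring
      · have hfix : sRefl γ θ = θ := by rw [RS.sRefl_apply, hθγ γ hγ hγα]; simp
        rw [hfix]
        exact Or.inr rfl
  -- extract a root ε' with α-coefficient 1 and ⟪ε',α⟫ = ⟪ε',δ⟫ = 1
  obtain ⟨ζ, hζΦ, hcζ, hcase⟩ := hH2
  have hstar : ∃ ε' ∈ Φ, B.coeff ε' α = 1 ∧ ⟪ε', α⟫_ℝ = 1 ∧ ⟪ε', θ - α - β⟫_ℝ = 1 := by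
    rcases hcase with ⟨h0a, h0d⟩ | ⟨h1a, h1d⟩
    · have hζθ : ⟪ζ, θ⟫_ℝ ≠ 0 := hT ζ hζΦ hcζ
      obtain ⟨k, hk, hk1, hk2⟩ := RS.inner_int hΦ hζΦ hθΦ
      interval_cases k
      · exfalso
        have heq : ζ = -θ := RS.eq_neg_of_inner_neg_two hΦ hζΦ hθΦ (by rw [hk]; norm_num)
        have h1 : B.coeff ζ α = -1 * B.coeff θ α + 0 * B.coeff θ α :=
          RS.coeff_comb B hζΦ hθΦ hθΦ (-1) 0 (by push_cast; rw [heq]; module) α hα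
        omega
      · exfalso
        have hadd : θ + ζ ∈ Φ := RS.add_mem hΦ hθΦ hζΦ
          (by rw [show ⟪θ,ζ⟫_ℝ = -1 from by rw [real_inner_comm]; rw [hk]; norm_num])
        have h1 := hcadd θ ζ hθΦ hζΦ hadd α hα
        have := hbound (θ + ζ) hadd
        omega
      · exact absurd (by rw [hk]; norm_num) hζθ
      · -- ⟪ζ,θ⟫ = 1 : take ε' = θ - ζ
        have hθζ : ⟪θ, ζ⟫_ℝ = 1 := by rw [real_inner_comm]; rw [hk]; norm_num
        have hsub : θ - ζ ∈ Φ := RS.sub_mem hΦ hθΦ hζΦ hθζ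
        refine ⟨θ - ζ, hsub, ?_, ?_, ?_⟩
        · rw [hcsub θ ζ hθΦ hζΦ hsub α hα, hcθα, hcζ]
          ring
        · rw [inner_sub_left, hθα, h0a]; ring
        · rw [inner_sub_left, hθd, h0d]; ring
      · exfalso
        have heq : ζ = θ := RS.eq_of_inner_two hΦ hζΦ hθΦ (by rw [hk]; norm_num)
        rw [heq] at hcζ
        omega
    · exact ⟨ζ, hζΦ, hcζ, h1a, h1d⟩
  obtain ⟨ε', hε'Φ, hcε', hε'α, hε'd⟩ := hstar
  -- μ := ε' - α  and  ν := (θ - α - β) - (ε' - α) - α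
  have hμΦ : ε' - α ∈ Φ := RS.sub_mem hΦ hε'Φ hαΦ hε'α
  have hcμ : B.coeff (ε' - α) α = 0 := by
    rw [hcsub ε' α hε'Φ hαΦ hμΦ α hα, hcε', hcαα]
    ring
  have hμα : ⟪ε' - α, α⟫_ℝ = -1 := by rw [inner_sub_left, hε'α, h2α]; ring
  have hμd : ⟪ε' - α, θ - α - β⟫_ℝ = 1 := by rw [inner_sub_left, hε'd, hαd]; ring
  have h2μ : ⟪ε' - α, ε' - α⟫_ℝ = 2 := hΦ.norm_two _ hμΦ
  have hσΦ : (θ - α - β) - (ε' - α) ∈ Φ :=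
    RS.sub_mem hΦ hdΦ hμΦ (by rw [real_inner_comm]; exact hμd)
  have hσα : ⟪(θ - α - β) - (ε' - α), α⟫_ℝ = 1 := by rw [inner_sub_left, hdα, hμα]; ring
  have hνΦ : (θ - α - β) - (ε' - α) - α ∈ Φ := RS.sub_mem hΦ hσΦ hαΦ hσα
  have hcσ : B.coeff ((θ - α - β) - (ε' - α)) α = 1 := by
    rw [hcsub _ _ hdΦ hμΦ hσΦ α hα, hcdα, hcμ]
    ring
  have hcν : B.coeff ((θ - α - β) - (ε' - α) - α) α = 0 := by
    rw [hcsub _ _ hσΦ hαΦ hνΦ α hα, hcσ, hcαα]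
    ring
  have h2ν : ⟪(θ-α-β) - (ε'-α) - α, (θ-α-β) - (ε'-α) - α⟫_ℝ = 2 := hΦ.norm_two _ hνΦ
  have hμν : ⟪ε' - α, (θ-α-β) - (ε'-α) - α⟫_ℝ = 0 := by
    rw [inner_sub_right, inner_sub_right, hμd, h2μ, hμα]
    ring
  have hνμ : ⟪(θ-α-β) - (ε'-α) - α, ε' - α⟫_ℝ = 0 := by
    rw [real_inner_comm]; exact hμν
  have hαμ : ⟪α, ε' - α⟫_ℝ = -1 := by rw [real_inner_comm]; exact hμα
  have hαν : ⟪α, (θ-α-β) - (ε'-α) - α⟫_ℝ = -1 := by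
    rw [inner_sub_right, inner_sub_right, hαd, hαμ, h2α]
    ring
  -- now abstract the two roots
  set μ : E := ε' - α with hμdef
  set ν : E := (θ - α - β) - (ε' - α) - α with hνdef
  have key : ∀ x : E, (sRefl μ * sRefl ν) x = x - ⟪x, ν⟫_ℝ • ν - ⟪x, μ⟫_ℝ • μ := by
    intro x
    show sRefl μ (sRefl ν x) = _
    rw [RS.sRefl_apply, RS.sRefl_apply, inner_sub_left, real_inner_smul_left, hνμ]
    module
  refine ⟨sRefl μ * sRefl ν, Submonoid.mul_mem _
    (RS.sRefl_mem_parabolic hΦ B hα hμΦ hcμ)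
    (RS.sRefl_mem_parabolic hΦ B hα hνΦ hcν), ?_, ?_⟩
  · funext x
    show (sRefl μ * sRefl ν) ((sRefl μ * sRefl ν) x) = x
    rw [key x, key (x - ⟪x, ν⟫_ℝ • ν - ⟪x, μ⟫_ℝ • μ)]
    simp only [inner_sub_left, real_inner_smul_left]
    rw [h2ν, h2μ, hμν, hνμ]
    module
  · show (sRefl μ * sRefl ν) α = θ - α - β
    rw [key α, hαν, hαμ, hμdef, hνdef]
    module

end PaperRS
end

section
/- Let Φ be an irreducible reduced crystallographic simply-laced root system with base Δ and highest root θ, and let α ∈ Δ be an extreme Heisenberg root with neighbour β. Then both θ − α and θ − α − β are roots, and θ − α − β is orthogonal to α: ⟨α, θ − α − β⟩ = 0. (This is the paper's claim that δ_α := α_max − α − β is a root, for a nice Heisenberg root α.) -/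
open scoped InnerProductSpace

namespace PaperRS

variable {E : Type*} [NormedAddCommGroup E] [InnerProductSpace ℝ E]

variable {Φ : Set E}

/-- Uniqueness of the coefficients of a root with respect to the base. -/
lemma coeff_unique (B : Base Φ) {δ : E} (hδ : δ ∈ Φ) (d : E → ℝ)
    (h : δ = ∑ γ ∈ B.Δ, d γ • γ) : ∀ γ ∈ B.Δ, (B.coeff δ γ : ℝ) = d γ := by
  have hexp := B.expand δ hδ
  have hzero : ∑ γ ∈ B.Δ, ((B.coeff δ γ : ℝ) - d γ) • γ = 0 := by
    simp only [sub_smul, Finset.sum_sub_distrib, ← hexp, ← h, sub_self]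
  have hzero' : ∑ i : {x : E // x ∈ B.Δ}, ((B.coeff δ i : ℝ) - d i) • (i : E) = 0 := by
    rw [Finset.sum_coe_sort B.Δ (fun γ => ((B.coeff δ γ : ℝ) - d γ) • γ)]
    exact hzero
  have hall := Fintype.linearIndependent_iff.mp B.indep
    (fun i : {x : E // x ∈ B.Δ} => (B.coeff δ i : ℝ) - d i) hzero'
  intro γ hγ
  exact sub_eq_zero.mp (hall ⟨γ, hγ⟩)

/-- For an extreme Heisenberg simple root `α` with neighbour `β`, both `θ - α` and
`θ - α - β` are roots, and `θ - α - β` is orthogonal to `α`. -/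
theorem delta_alpha_is_root
    (hΦ : IsRootSystem Φ) (hirr : IsIrreducible Φ) (B : Base Φ)
    {θ α β : E} (hθ : IsHighest B θ) (hα : α ∈ B.Δ)
    (hext : IsExtreme B α β) (hH : IsHeisenberg B θ α) :
    θ - α ∈ Φ ∧ θ - α - β ∈ Φ ∧ ⟪α, θ - α - β⟫_ℝ = 0 := by
  classical
  obtain ⟨hθΦ, hθmax⟩ := hθ
  obtain ⟨hβΔ, hβα, hαβ0, -⟩ := hext
  obtain ⟨hθα2, hHeis⟩ := hH
  have hαΦ : α ∈ Φ := B.subset hα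
  have hβΦ : β ∈ Φ := B.subset hβΔ
  have hαα : ⟪α, α⟫_ℝ = 2 := hΦ.norm_two α hαΦ
  have hββ : ⟪β, β⟫_ℝ = 2 := hΦ.norm_two β hβΦ
  have hαβne : α ≠ β := Ne.symm hβα
  -- the coefficient of a simple root at itself is 1, elsewhere 0
  have hsimple : ∀ γ ∈ B.Δ, ∀ γ' ∈ B.Δ, (B.coeff γ γ' : ℝ) = if γ' = γ then 1 else 0 := by
    intro γ hγ γ' hγ'
    refine coeff_unique B (B.subset hγ) (fun x => if x = γ then 1 else 0) ?_ γ' hγ'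
    symm
    simp [ite_smul, Finset.sum_ite_eq' B.Δ γ, hγ]
  -- α + β ≠ 0
  have hαpβ : α + β ≠ 0 := by
    intro h
    have hαe : α = ∑ x ∈ B.Δ, (fun x => if x = β then (-1 : ℝ) else 0) x • x := by
      have hsum : ∑ x ∈ B.Δ, (fun x => if x = β then (-1 : ℝ) else 0) x • x = -β := by
        simp [ite_smul, Finset.sum_ite_eq' B.Δ β, hβΔ]
      rw [hsum]
      exact eq_neg_of_add_eq_zero_left h
    have h1 := coeff_unique B hαΦ _ hαe α hα
    have h2 := hsimple α hα α hα
    rw [h2] at h1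
    simp [hαβne] at h1
  -- ⟪α, β⟫ = -1
  obtain ⟨n, hn⟩ := hΦ.cartan_int α hαΦ β hβΦ
  have hβαin : ⟪β, α⟫_ℝ = (n : ℝ) := (real_inner_comm α β).trans hn
  have hn1 : n < 2 := by
    have hne : α - β ≠ 0 := sub_ne_zero.mpr hαβne
    have hpos : (0 : ℝ) < ⟪α - β, α - β⟫_ℝ :=
      lt_of_le_of_ne real_inner_self_nonneg
        (fun h => hne (inner_self_eq_zero.mp h.symm))
    have hval : ⟪α - β, α - β⟫_ℝ = 4 - 2 * n := by
      rw [inner_sub_left, inner_sub_right, inner_sub_right, hαα, hββ, hn, hβαin]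
      ring
    rw [hval] at hpos
    have : (n : ℝ) < 2 := by linarith
    exact_mod_cast this
  have hn2 : -2 < n := by
    have hpos : (0 : ℝ) < ⟪α + β, α + β⟫_ℝ :=
      lt_of_le_of_ne real_inner_self_nonneg
        (fun h => hαpβ (inner_self_eq_zero.mp h.symm))
    have hval : ⟪α + β, α + β⟫_ℝ = 4 + 2 * n := by
      rw [inner_add_left, inner_add_right, inner_add_right, hαα, hββ, hn, hβαin]
      ring
    rw [hval] at hpos
    have : (-2 : ℝ) < n := by linarith
    exact_mod_cast this
  have hn0 : n ≠ 0 := by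
    intro h
    apply hαβ0
    rw [hn, h]
    norm_num
  have hnne1 : n ≠ 1 := by
    intro h
    have hρ : β - α ∈ Φ := by
      have := hΦ.reflect_mem α hαΦ β hβΦ
      rwa [hβαin, h, Int.cast_one, one_smul] at this
    have hexp : β - α = ∑ x ∈ B.Δ,
        (fun x => (if x = β then (1 : ℝ) else 0) - if x = α then 1 else 0) x • x := by
      have h1 : ∑ x ∈ B.Δ, (if x = β then (1 : ℝ) else 0) • x = β := by
        simp [ite_smul, Finset.sum_ite_eq' B.Δ β, hβΔ]
      have h2 : ∑ x ∈ B.Δ, (if x = α then (1 : ℝ) else 0) • x = α := by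
        simp [ite_smul, Finset.sum_ite_eq' B.Δ α, hα]
      simp only [sub_smul, Finset.sum_sub_distrib, h1, h2]
    have hcα := coeff_unique B hρ _ hexp α hα
    have hcβ := coeff_unique B hρ _ hexp β hβΔ
    rw [if_neg hαβne, if_pos rfl] at hcα
    rw [if_pos rfl, if_neg hβα] at hcβ
    norm_num at hcα hcβ
    have hcα' : B.coeff (β - α) α = -1 := by exact_mod_cast hcα
    have hcβ' : B.coeff (β - α) β = 1 := by exact_mod_cast hcβ
    rcases B.sign (β - α) hρ with hs | hs
    · have := hs α hα; omega
    · have := hs β hβΔ; omega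
  have hnval : n = -1 := by omega
  have hαβ : ⟪α, β⟫_ℝ = -1 := by rw [hn, hnval]; norm_num
  -- θ is orthogonal to every simple root other than α
  have horth : ∀ γ ∈ B.Δ, γ ≠ α → ⟪θ, γ⟫_ℝ = 0 := by
    intro γ hγ hγα
    have hγΦ : γ ∈ Φ := B.subset hγ
    have hγ0 : γ ≠ 0 := fun h => hΦ.nonzero (h ▸ hγΦ)
    obtain ⟨m, hm⟩ := hΦ.cartan_int θ hθΦ γ hγΦ
    by_cases hmz : m = 0
    · rw [hm, hmz]; norm_num
    have hρ : θ - (m : ℝ) • γ ∈ Φ := by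
      have := hΦ.reflect_mem γ hγΦ θ hθΦ
      rwa [hm] at this
    have hexp : θ - (m : ℝ) • γ = ∑ x ∈ B.Δ,
        (fun x => (B.coeff θ x : ℝ) - if x = γ then (m : ℝ) else 0) x • x := by
      have hsum : ∑ x ∈ B.Δ, (if x = γ then (m : ℝ) else 0) • x = (m : ℝ) • γ := by
        simp [ite_smul, Finset.sum_ite_eq' B.Δ γ, hγ]
      simp only [sub_smul, Finset.sum_sub_distrib, ← B.expand θ hθΦ, hsum]
    have hcα := coeff_unique B hρ _ hexp α hα
    rw [if_neg (Ne.symm hγα), sub_zero, hθα2] at hcα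
    have hcα' : B.coeff (θ - (m : ℝ) • γ) α = 2 := by exact_mod_cast hcα
    have hρθ : θ - (m : ℝ) • γ ≠ θ := by
      intro h
      have hz : (m : ℝ) • γ = 0 := sub_eq_self.mp h
      rcases smul_eq_zero.mp hz with h' | h'
      · exact hmz (by exact_mod_cast h')
      · exact hγ0 h'
    have hρnθ : θ - (m : ℝ) • γ ≠ -θ := by
      intro h
      have hexp2 : θ - (m : ℝ) • γ = ∑ x ∈ B.Δ,
          (fun x => -(B.coeff θ x : ℝ)) x • x := by
        rw [h]
        simp only [neg_smul, Finset.sum_neg_distrib]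
        rw [← B.expand θ hθΦ]
      have hc := coeff_unique B hρ _ hexp2 α hα
      rw [hθα2] at hc
      have hc' : B.coeff (θ - (m : ℝ) • γ) α = -2 := by
        push_cast at hc
        exact_mod_cast hc
      omega
    rcases hHeis _ hρ hρθ hρnθ with h | h | h <;> omega
  -- ⟪θ, α⟫ = 1
  have hθθ : ⟪θ, θ⟫_ℝ = 2 := hΦ.norm_two θ hθΦ
  have hθα : ⟪θ, α⟫_ℝ = 1 := by
    have hsum : ⟪θ, θ⟫_ℝ = ∑ γ ∈ B.Δ, (B.coeff θ γ : ℝ) * ⟪θ, γ⟫_ℝ := by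
      nth_rewrite 2 [B.expand θ hθΦ]
      rw [inner_sum]
      exact Finset.sum_congr rfl fun γ _ => real_inner_smul_right θ γ _
    rw [Finset.sum_eq_single_of_mem α hα
      (fun γ hγ hne => by rw [horth γ hγ hne, mul_zero])] at hsum
    rw [hθθ, hθα2] at hsum
    push_cast at hsum
    linarith
  -- θ - α is a root
  have hroot1 : θ - α ∈ Φ := by
    have := hΦ.reflect_mem α hαΦ θ hθΦ
    rwa [hθα, one_smul] at this
  -- θ - α - β is a root
  have hθβ : ⟪θ, β⟫_ℝ = 0 := horth β hβΔ hβα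
  have hroot2 : θ - α - β ∈ Φ := by
    have hin : ⟪θ - α, β⟫_ℝ = 1 := by
      rw [inner_sub_left, hθβ, hαβ]; ring
    have := hΦ.reflect_mem β hβΦ (θ - α) hroot1
    rwa [hin, one_smul] at this
  refine ⟨hroot1, hroot2, ?_⟩
  have hαθ : ⟪α, θ⟫_ℝ = 1 := (real_inner_comm θ α).trans hθα
  rw [inner_sub_right, inner_sub_right, hαθ, hαα, hαβ]
  ring

end PaperRS
end
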